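/- Let M ∈ ℝ^{n×n} be a symmetric matrix and let N ∈ ℝ^{2n×2n} be the block matrix [[0, M],[M, 0]]. Then for all vectors x, y ∈ {0,1}^n there exists a symmetric positive semidefinite matrix X ∈ ℝ^{2n×2n} with X_{i,i} = 1 for all i such that |xᵀ M y| ≤ (1/2) · (N • X), where N • X = tr(Nᵀ X) = Σ_{i,j} N_{i,j} X_{i,j}. In particular, the cut norm max_{x,y ∈ {0,1}^n} |xᵀ M y| is bounded by the value of the semidefinite program max{ (1/2) N • X : X symmetric, X ⪰ 0, X_{i,i} = 1 for all i }. -/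

import Mathlib

open Matrix

lemma gram_posSemidef {m k : Type*} [Fintype m] [Fintype k] (f : m → k → ℝ) :
    (Matrix.of fun i j => f i ⬝ᵥ f j).PosSemidef := by
  have h : (Matrix.of fun i j => f i ⬝ᵥ f j) =
      (Matrix.of fun (a : k) (i : m) => f i a)ᴴ * (Matrix.of fun a i => f i a) := by
    ext i j
    simp [Matrix.mul_apply, dotProduct, Matrix.conjTranspose_apply]
  rw [h]
  exact Matrix.posSemidef_conjTranspose_mul_self _

lemma cut_construction (n : ℕ) (M : Matrix (Fin n) (Fin n) ℝ) (hM : M.IsSymm)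
    (x y : Fin n → ℝ) (hx : ∀ i, x i = 0 ∨ x i = 1) (hy : ∀ i, y i = 0 ∨ y i = 1) :
    ∃ X : Matrix (Fin n ⊕ Fin n) (Fin n ⊕ Fin n) ℝ,
      X.IsSymm ∧ X.PosSemidef ∧ (∀ i, X i i = 1) ∧
        |x ⬝ᵥ M.mulVec y| =
          (1/2) * ∑ i, ∑ j, (Matrix.fromBlocks 0 M M 0 : Matrix (Fin n ⊕ Fin n) (Fin n ⊕ Fin n) ℝ) i j * X i j := by
  set v : ℝ := x ⬝ᵥ M.mulVec y with hv
  set ε : ℝ := if 0 ≤ v then 1 else -1 with hε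
  have hε2 : ε * ε = 1 := by rw [hε]; split_ifs <;> norm_num
  set f : Fin n ⊕ Fin n → Fin 3 → ℝ :=
    Sum.elim (fun i => if x i = 1 then Pi.single (0 : Fin 3) ε else Pi.single 2 1)
      (fun j => if y j = 1 then Pi.single 0 1 else Pi.single 1 1) with hf
  have hd : ∀ a, f a ⬝ᵥ f a = 1 := by
    intro a
    rcases a with i | j
    · rcases hx i with h | h
      · simp [hf, h, single_dotProduct, Pi.single_apply]
      · simp [hf, h, single_dotProduct, Pi.single_apply, hε2]
    · rcases hy j with h | h
      · simp [hf, h, single_dotProduct, Pi.single_apply]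
      · simp [hf, h, single_dotProduct, Pi.single_apply]
  have hkey : ∀ i j, f (Sum.inl i) ⬝ᵥ f (Sum.inr j) = ε * (x i * y j) := by
    intro i j
    rcases hx i with h | h <;> rcases hy j with k | k <;>
      simp [hf, h, k, single_dotProduct, Pi.single_apply]
  have hswap : ∀ i j, f (Sum.inr i) ⬝ᵥ f (Sum.inl j) = ε * (x j * y i) := by
    intro i j; rw [dotProduct_comm]; exact hkey j i
  have hMsym : ∀ i j, M j i = M i j := by
    intro i j
    have h := congrFun (congrFun hM j) i
    simpa [Matrix.transpose_apply] using h.symm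
  refine ⟨Matrix.of fun a b => f a ⬝ᵥ f b, ?_, gram_posSemidef f, fun a => hd a, ?_⟩
  · ext a b
    simp only [Matrix.transpose_apply, Matrix.of_apply]
    exact dotProduct_comm _ _
  · rw [Fintype.sum_sum_type]
    have hA : ∀ i : Fin n, (∑ b, (Matrix.fromBlocks 0 M M 0 : Matrix (Fin n ⊕ Fin n) (Fin n ⊕ Fin n) ℝ) (Sum.inl i) b * (Matrix.of fun a b => f a ⬝ᵥ f b) (Sum.inl i) b)
        = ∑ j, M i j * (ε * (x i * y j)) := by
      intro i
      rw [Fintype.sum_sum_type]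
      simp only [Matrix.fromBlocks_apply₁₁, Matrix.fromBlocks_apply₁₂, Matrix.zero_apply,
        zero_mul, Finset.sum_const_zero, zero_add, Matrix.of_apply]
      exact Finset.sum_congr rfl fun j _ => by rw [hkey]
    have hB : ∀ i : Fin n, (∑ b, (Matrix.fromBlocks 0 M M 0 : Matrix (Fin n ⊕ Fin n) (Fin n ⊕ Fin n) ℝ) (Sum.inr i) b * (Matrix.of fun a b => f a ⬝ᵥ f b) (Sum.inr i) b)
        = ∑ j, M i j * (ε * (x j * y i)) := by
      intro i
      rw [Fintype.sum_sum_type]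
      simp only [Matrix.fromBlocks_apply₂₁, Matrix.fromBlocks_apply₂₂, Matrix.zero_apply,
        zero_mul, Finset.sum_const_zero, add_zero, Matrix.of_apply]
      exact Finset.sum_congr rfl fun j _ => by rw [hswap]
    rw [Finset.sum_congr rfl fun i _ => hA i, Finset.sum_congr rfl fun i _ => hB i]
    have hBB : ∑ i, ∑ j, M i j * (ε * (x j * y i)) = ∑ i, ∑ j, M i j * (ε * (x i * y j)) := by
      rw [Finset.sum_comm]
      exact Finset.sum_congr rfl fun i _ => Finset.sum_congr rfl fun j _ => by rw [hMsym i j]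
    rw [hBB]
    have hAA : ∑ i, ∑ j, M i j * (ε * (x i * y j)) = ε * v := by
      rw [hv]
      simp only [dotProduct, Matrix.mulVec, Finset.mul_sum]
      exact Finset.sum_congr rfl fun i _ => Finset.sum_congr rfl fun j _ => by ring
    rw [hAA]
    have habs : ε * v = |v| := by
      rw [hε]; split_ifs with h
      · rw [abs_of_nonneg h]; ring
      · rw [abs_of_neg (not_le.mp h)]; ring
    rw [habs]; ring

lemma psd_entry_abs_le {m : Type*} [Fintype m] [DecidableEq m] {X : Matrix m m ℝ}
    (hX : X.PosSemidef) (hd : ∀ i, X i i = 1) (i j : m) : |X i j| ≤ 1 := by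
  rcases eq_or_ne i j with rfl | hij
  · simp [hd i]
  have hsym : X j i = X i j := by
    have h := congrFun (congrFun hX.1 i) j
    simpa [Matrix.conjTranspose_apply] using h
  have key : ∀ c : ℝ, 0 ≤ 1 + c * c + 2 * c * X i j := by
    intro c
    have h := hX.dotProduct_mulVec_nonneg (Pi.single i 1 + Pi.single j c)
    simp only [star_trivial, Matrix.mulVec_add, Matrix.mulVec_single, dotProduct_add,
      add_dotProduct, single_dotProduct, dotProduct_single] at h
    simp only [Pi.smul_apply, Matrix.col_apply, op_smul_eq_mul] at h
    rw [hd i, hd j, hsym] at h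
    nlinarith [h]
  have h1 := key 1
  have h2 := key (-1)
  rw [abs_le]
  constructor <;> nlinarith

theorem cutnorm_le_sdp (n : ℕ) (M : Matrix (Fin n) (Fin n) ℝ) (hM : M.IsSymm)
    (N : Matrix (Fin n ⊕ Fin n) (Fin n ⊕ Fin n) ℝ)
    (hN : N = Matrix.fromBlocks 0 M M 0) :
    (∀ x y : Fin n → ℝ, (∀ i, x i = 0 ∨ x i = 1) → (∀ i, y i = 0 ∨ y i = 1) →
      ∃ X : Matrix (Fin n ⊕ Fin n) (Fin n ⊕ Fin n) ℝ,
        X.IsSymm ∧ X.PosSemidef ∧ (∀ i, X i i = 1) ∧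
          |x ⬝ᵥ M.mulVec y| ≤ (1 / 2) * ∑ i, ∑ j, N i j * X i j) ∧
    sSup {v : ℝ | ∃ x y : Fin n → ℝ, (∀ i, x i = 0 ∨ x i = 1) ∧ (∀ i, y i = 0 ∨ y i = 1) ∧
        v = |x ⬝ᵥ M.mulVec y|} ≤
      sSup {r : ℝ | ∃ X : Matrix (Fin n ⊕ Fin n) (Fin n ⊕ Fin n) ℝ,
        X.IsSymm ∧ X.PosSemidef ∧ (∀ i, X i i = 1) ∧
          r = (1 / 2) * ∑ i, ∑ j, N i j * X i j} := by
  subst hN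
  have main : ∀ x y : Fin n → ℝ, (∀ i, x i = 0 ∨ x i = 1) → (∀ i, y i = 0 ∨ y i = 1) →
      ∃ X : Matrix (Fin n ⊕ Fin n) (Fin n ⊕ Fin n) ℝ,
        X.IsSymm ∧ X.PosSemidef ∧ (∀ i, X i i = 1) ∧
          |x ⬝ᵥ M.mulVec y| ≤ (1 / 2) * ∑ i, ∑ j,
            (Matrix.fromBlocks 0 M M 0 : Matrix (Fin n ⊕ Fin n) (Fin n ⊕ Fin n) ℝ) i j * X i j := by
    intro x y hx hy
    obtain ⟨X, h1, h2, h3, h4⟩ := cut_construction n M hM x y hx hy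
    exact ⟨X, h1, h2, h3, le_of_eq h4⟩
  refine ⟨main, ?_⟩
  have hbdd : BddAbove {r : ℝ | ∃ X : Matrix (Fin n ⊕ Fin n) (Fin n ⊕ Fin n) ℝ,
      X.IsSymm ∧ X.PosSemidef ∧ (∀ i, X i i = 1) ∧
        r = (1 / 2) * ∑ i, ∑ j,
          (Matrix.fromBlocks 0 M M 0 : Matrix (Fin n ⊕ Fin n) (Fin n ⊕ Fin n) ℝ) i j * X i j} := by
    refine ⟨(1 / 2) * ∑ i, ∑ j,
      |(Matrix.fromBlocks 0 M M 0 : Matrix (Fin n ⊕ Fin n) (Fin n ⊕ Fin n) ℝ) i j|, ?_⟩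
    rintro r ⟨X, hXs, hXp, hXd, rfl⟩
    have hentry : ∀ i j, (Matrix.fromBlocks 0 M M 0 : Matrix (Fin n ⊕ Fin n) (Fin n ⊕ Fin n) ℝ) i j * X i j ≤
        |(Matrix.fromBlocks 0 M M 0 : Matrix (Fin n ⊕ Fin n) (Fin n ⊕ Fin n) ℝ) i j| := by
      intro i j
      calc (Matrix.fromBlocks 0 M M 0 : Matrix (Fin n ⊕ Fin n) (Fin n ⊕ Fin n) ℝ) i j * X i j
          ≤ |(Matrix.fromBlocks 0 M M 0 : Matrix (Fin n ⊕ Fin n) (Fin n ⊕ Fin n) ℝ) i j * X i j| := le_abs_self _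
        _ = |(Matrix.fromBlocks 0 M M 0 : Matrix (Fin n ⊕ Fin n) (Fin n ⊕ Fin n) ℝ) i j| * |X i j| := abs_mul _ _
        _ ≤ |(Matrix.fromBlocks 0 M M 0 : Matrix (Fin n ⊕ Fin n) (Fin n ⊕ Fin n) ℝ) i j| * 1 :=
            mul_le_mul_of_nonneg_left (psd_entry_abs_le hXp hXd i j) (abs_nonneg _)
        _ = _ := mul_one _
    have : (∑ i, ∑ j, (Matrix.fromBlocks 0 M M 0 : Matrix (Fin n ⊕ Fin n) (Fin n ⊕ Fin n) ℝ) i j * X i j)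
        ≤ ∑ i, ∑ j, |(Matrix.fromBlocks 0 M M 0 : Matrix (Fin n ⊕ Fin n) (Fin n ⊕ Fin n) ℝ) i j| :=
      Finset.sum_le_sum fun i _ => Finset.sum_le_sum fun j _ => hentry i j
    linarith
  apply Real.sSup_le
  · rintro v ⟨x, y, hx, hy, rfl⟩
    obtain ⟨X, h1, h2, h3, h4⟩ := main x y hx hy
    exact h4.trans (le_csSup hbdd ⟨X, h1, h2, h3, rfl⟩)
  · have h0 : ((1:ℝ) / 2) * ∑ i, ∑ j,
        (Matrix.fromBlocks 0 M M 0 : Matrix (Fin n ⊕ Fin n) (Fin n ⊕ Fin n) ℝ) i j * (1 : Matrix (Fin n ⊕ Fin n) (Fin n ⊕ Fin n) ℝ) i j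
        ∈ {r : ℝ | ∃ X : Matrix (Fin n ⊕ Fin n) (Fin n ⊕ Fin n) ℝ,
          X.IsSymm ∧ X.PosSemidef ∧ (∀ i, X i i = 1) ∧
            r = (1 / 2) * ∑ i, ∑ j,
              (Matrix.fromBlocks 0 M M 0 : Matrix (Fin n ⊕ Fin n) (Fin n ⊕ Fin n) ℝ) i j * X i j} :=
      ⟨1, Matrix.isSymm_one, Matrix.PosSemidef.one, fun i => Matrix.one_apply_eq i, rfl⟩
    have hmem := le_csSup hbdd h0
    -- need 0 ≤ sSup S₂ : use the element |0 ⬝ᵥ M *ᵥ 0| ≤ ...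
    obtain ⟨X, h1, h2, h3, h4⟩ := main 0 0 (fun i => Or.inl rfl) (fun i => Or.inl rfl)
    have h5 := le_csSup hbdd ⟨X, h1, h2, h3, rfl⟩
    have h6 : (0:ℝ) ≤ |(0 : Fin n → ℝ) ⬝ᵥ M.mulVec 0| := abs_nonneg _
    linarith
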